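/- Let (X, 𝒰) be a uniform space, u ∈ ℱ(X), W ∈ 𝒰, and suppose 0 = α₀ < α₁ < ⋯ < α_n = 1 satisfies (u_{α_k⁺}, u_{α_{k+1}}) ∈ 𝒦[W] for all k. If 0 = β₀ < β₁ < ⋯ < β_m = 1 is a refinement of this partition, then (u_{β_k⁺}, u_{β_{k+1}}) ∈ 𝒦[W] for all k = 0, ..., m−1. -/

import Mathlib

open Set Filter Topology
open scoped Uniformity

/-- The α-cut of a fuzzy set: `{x | α ≤ u x}` for `α ≠ 0`, and the support
(closure of `{x | 0 < u x}`) for `α = 0`. -/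
noncomputable def fuzzyCut {X : Type*} [TopologicalSpace X] (u : X → ℝ) (α : ℝ) : Set X :=
  if α = 0 then closure {x | 0 < u x} else {x | α ≤ u x}

/-- `u` belongs to `ℱ(X)`: a normal upper semicontinuous `[0,1]`-valued fuzzy set
with compact support. -/
structure IsFuzzySet {X : Type*} [TopologicalSpace X] (u : X → ℝ) : Prop where
  mem_Icc : ∀ x, u x ∈ Set.Icc (0:ℝ) 1
  usc : UpperSemicontinuous u
  normal : ∃ x, u x = 1
  compact_supp : IsCompact (closure {x | 0 < u x})

/-- The Zadeh extension of `f`: `x ↦ sup {u z : f z = x}` (and `0` when the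
preimage is empty, since `sSup ∅ = 0` in `ℝ`). -/
noncomputable def zadeh {X : Type*} (f : X → X) (u : X → ℝ) : X → ℝ :=
  fun x => sSup (u '' (f ⁻¹' {x}))

/-- `W(A) = ⋃ a ∈ A, W(a)` where `W(a) = {y | (a, y) ∈ W}`. -/
def ballImage {Y : Type*} (W : Set (Y × Y)) (A : Set Y) : Set Y :=
  {y | ∃ a ∈ A, (a, y) ∈ W}

/-- The Hausdorff entourage relation `𝒦[W]`: `(A,B) ∈ 𝒦[W]` iff `A ⊆ W(B)` and `B ⊆ W(A)`. -/
def KRel {Y : Type*} (W : Set (Y × Y)) (A B : Set Y) : Prop :=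
  A ⊆ ballImage W B ∧ B ⊆ ballImage W A

/-- The level-wise entourage relation `ℱ[W]`: `(u_α, v_α) ∈ 𝒦[W]` for all `α ∈ [0,1]`. -/
def FRel {X : Type*} [TopologicalSpace X] (W : Set (X × X)) (u v : X → ℝ) : Prop :=
  ∀ α ∈ Set.Icc (0:ℝ) 1, KRel W (fuzzyCut u α) (fuzzyCut v α)

/-- The Skorokhod entourage relation `G[W, ε]`: there is an increasing homeomorphism `t`
of `[0,1]` with `‖t‖ < ε` and `(u_α, v_{t α}) ∈ 𝒦[W]` for all `α ∈ [0,1]`. -/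
def SkoRel {X : Type*} [TopologicalSpace X] (W : Set (X × X)) (ε : ℝ) (u v : X → ℝ) : Prop :=
  ∃ t : ℝ → ℝ, StrictMonoOn t (Set.Icc 0 1) ∧ t 0 = 0 ∧ t 1 = 1 ∧
    Set.MapsTo t (Set.Icc 0 1) (Set.Icc 0 1) ∧ Set.SurjOn t (Set.Icc 0 1) (Set.Icc 0 1) ∧
    (∀ α ∈ Set.Icc (0:ℝ) 1, |t α - α| < ε) ∧
    (∀ α ∈ Set.Icc (0:ℝ) 1, KRel W (fuzzyCut u α) (fuzzyCut v (t α)))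

/-- The sendograph of `u`: `end(u) ∩ (u₀ × [0,1])`. -/
noncomputable def send {X : Type*} [TopologicalSpace X] (u : X → ℝ) : Set (X × ℝ) :=
  {p | p.1 ∈ fuzzyCut u 0 ∧ p.2 ∈ Set.Icc (0:ℝ) 1 ∧ p.2 ≤ u p.1}

/-- The product entourage `U × V_ε` on `X × [0,1]`. -/
def prodEnt {X : Type*} (U : Set (X × X)) (ε : ℝ) : Set ((X × ℝ) × (X × ℝ)) :=
  {p | (p.1.1, p.2.1) ∈ U ∧ |p.1.2 - p.2.2| < ε}

/-- The sendograph entourage relation `S[U, ε]`. -/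
noncomputable def SendRel {X : Type*} [TopologicalSpace X] (U : Set (X × X)) (ε : ℝ)
    (u v : X → ℝ) : Prop :=
  KRel (prodEnt U ε) (send u) (send v)

/-- `u_{α⁺} = closure (⋃ β ∈ (α, 1], u_β)`, the right limit of the level map. -/
noncomputable def cutPlus {X : Type*} [TopologicalSpace X] (u : X → ℝ) (α : ℝ) : Set X :=
  closure (⋃ β ∈ Set.Ioc α 1, fuzzyCut u β)

/-- `B` belongs to the Vietoris basic open set `⟨V 0, …, V (k-1)⟩`. -/
def inVietoris {Y : Type*} (B : Set Y) (k : ℕ) (V : Fin k → Set Y) : Prop :=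
  B ⊆ (⋃ i, V i) ∧ ∀ i, (B ∩ V i).Nonempty

/-- If a partition `0 = α₀ < ⋯ < α_n = 1` satisfies `(u_{α_k⁺}, u_{α_{k+1}}) ∈ 𝒦[W]` for
all `k`, then so does any refinement `0 = β₀ < ⋯ < β_m = 1` of it. -/
theorem stmt18 {X : Type*} [UniformSpace X] {u : X → ℝ} (hu : IsFuzzySet u)
    {W : Set (X × X)} (hW : W ∈ 𝓤 X) {n m : ℕ}
    {a : Fin (n + 1) → ℝ} {b : Fin (m + 1) → ℝ}
    (ha : StrictMono a) (ha0 : a 0 = 0) (ha1 : a (Fin.last n) = 1)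
    (hb : StrictMono b) (hb0 : b 0 = 0) (hb1 : b (Fin.last m) = 1)
    (hrefine : Set.range a ⊆ Set.range b)
    (hpart : ∀ k : Fin n, KRel W (cutPlus u (a k.castSucc)) (fuzzyCut u (a k.succ))) :
    ∀ k : Fin m, KRel W (cutPlus u (b k.castSucc)) (fuzzyCut u (b k.succ)) := by
  -- auxiliary facts about ballImage
  have ballMono : ∀ {A B : Set X}, A ⊆ B → ballImage W A ⊆ ballImage W B := by
    rintro A B hAB y ⟨z, hz, hzy⟩
    exact ⟨z, hAB hz, hzy⟩
  have selfSub : ∀ A : Set X, A ⊆ ballImage W A := by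
    intro A x hx
    exact ⟨x, hx, refl_mem_uniformity hW⟩
  -- antitonicity of cutPlus
  have cutPlusAnti : ∀ {α β : ℝ}, α ≤ β → cutPlus u β ⊆ cutPlus u α := by
    intro α β hle
    exact closure_mono (Set.biUnion_subset_biUnion_left (Set.Ioc_subset_Ioc_left hle))
  -- fuzzyCut is antitone for positive levels
  have fcAnti : ∀ {α β : ℝ}, 0 < α → α ≤ β → fuzzyCut u β ⊆ fuzzyCut u α := by
    intro α β hα hle
    have hβ : (0:ℝ) < β := lt_of_lt_of_le hα hle
    simp only [fuzzyCut, if_neg hα.ne', if_neg hβ.ne']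
    intro x hx
    exact le_trans hle hx
  -- fuzzyCut at a higher level sits inside cutPlus at a lower level
  have fcSubCutPlus : ∀ {α β : ℝ}, α < β → β ≤ 1 → fuzzyCut u β ⊆ cutPlus u α := by
    intro α β h1 h2
    exact (Set.subset_biUnion_of_mem (show β ∈ Set.Ioc α 1 from ⟨h1, h2⟩)).trans
      subset_closure
  intro k
  set s := b k.castSucc with hs
  set t := b k.succ with ht
  have hst : s < t := hb (Fin.castSucc_lt_succ : k.castSucc < k.succ)
  have ht1 : t ≤ 1 := by rw [ht, ← hb1]; exact hb.monotone (Fin.le_last _)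
  have ht0 : (0:ℝ) < t := by rw [ht, ← hb0]; exact hb (Fin.succ_pos k)
  have hn : 0 < n := by
    rcases Nat.eq_zero_or_pos n with h | h
    · subst h
      rw [show Fin.last 0 = 0 from rfl, ha0] at ha1
      norm_num at ha1
    · exact h
  -- find the interval of the coarse partition containing [s, t]
  obtain ⟨j, hj1, hj2⟩ : ∃ j : Fin n, a j.castSucc ≤ s ∧ t ≤ a j.succ := by
    classical
    set S : Finset (Fin n) := Finset.univ.filter (fun i => a i.castSucc ≤ s) with hS
    have h0S : (⟨0, hn⟩ : Fin n) ∈ S := by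
      have : a (Fin.castSucc ⟨0, hn⟩) = 0 := by
        rw [show Fin.castSucc (⟨0, hn⟩ : Fin n) = 0 from rfl, ha0]
      simp only [hS, Finset.mem_filter, Finset.mem_univ, true_and, this]
      rw [hs, ← hb0]
      exact hb.monotone (Fin.zero_le _)
    have hSne : S.Nonempty := ⟨_, h0S⟩
    refine ⟨S.max' hSne, ?_, ?_⟩
    · have := S.max'_mem hSne
      simpa only [hS, Finset.mem_filter, Finset.mem_univ, true_and] using this
    · set j := S.max' hSne with hj
      by_contra hcon
      push_neg at hcon
      obtain ⟨i, hi⟩ := hrefine ⟨j.succ, rfl⟩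
      have hik : i < k.succ := hb.lt_iff_lt.mp (by rw [hi]; exact hcon)
      have hile : b i ≤ s := by
        rw [hs]
        exact hb.monotone (Fin.le_castSucc_iff.mpr hik)
      have hjs : a j.succ ≤ s := hi ▸ hile
      have hne : j.succ ≠ Fin.last n := by
        intro h
        rw [h, ha1] at hjs
        exact absurd (lt_of_le_of_lt hjs hst) (not_lt.mpr ht1)
      obtain ⟨j', hj'⟩ := Fin.exists_castSucc_eq.mpr hne
      have hj'S : j' ∈ S := by
        simp only [hS, Finset.mem_filter, Finset.mem_univ, true_and]
        rw [hj']
        exact hjs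
      have hle : j' ≤ j := S.le_max' j' hj'S
      have hlt : j < j' := by
        have : j.castSucc < j'.castSucc := by rw [hj']; exact (Fin.castSucc_lt_succ : j.castSucc < j.succ)
        exact Fin.castSucc_lt_castSucc_iff.mp this
      exact absurd hle (not_le.mpr hlt)
  have haj0 : (0:ℝ) < a j.succ := by rw [← ha0]; exact ha (Fin.succ_pos j)
  constructor
  · -- cutPlus u s ⊆ W(fuzzyCut u t)
    calc cutPlus u s ⊆ cutPlus u (a j.castSucc) := cutPlusAnti hj1
      _ ⊆ ballImage W (fuzzyCut u (a j.succ)) := (hpart j).1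
      _ ⊆ ballImage W (fuzzyCut u t) := ballMono (fcAnti ht0 hj2)
  · -- fuzzyCut u t ⊆ W(cutPlus u s)
    calc fuzzyCut u t ⊆ cutPlus u s := fcSubCutPlus hst ht1
      _ ⊆ ballImage W (cutPlus u s) := selfSub _
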